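/- (First-order condition at a minimizing direction; step (4) in the proof of the paper's Lemma on holomorphic sectional curvature.) Let R be a Kähler-like curvature tensor on V and let u be a unit vector with H(u) ≤ H(v) for every unit vector v ∈ V. Then for every unit vector w ∈ V with ⟨w,u⟩ = 0, one has R(u,u,u,w) = 0 and R(u,u,w,u) = 0 (here u occupies all remaining slots, and w occupies the fourth and third slot respectively). -/

import Mathlib

/-- A Kähler-like curvature tensor on a complex vector space `V`:
a map `R : V × V × V × V → ℂ` that is complex-linear in the first and third
arguments, conjugate-linear in the second and fourth arguments, and satisfies
the symmetries `R(X,Y,Z,W) = R(Z,Y,X,W)` and `R(X,Y,Z,W) = conj (R(Y,X,W,Z))`. -/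
structure IsKahlerLike {V : Type*} [AddCommGroup V] [Module ℂ V]
    (R : V → V → V → V → ℂ) : Prop where
  add1 : ∀ X X' Y Z W, R (X + X') Y Z W = R X Y Z W + R X' Y Z W
  smul1 : ∀ (a : ℂ) (X Y Z W), R (a • X) Y Z W = a * R X Y Z W
  add2 : ∀ X Y Y' Z W, R X (Y + Y') Z W = R X Y Z W + R X Y' Z W
  smul2 : ∀ (a : ℂ) (X Y Z W), R X (a • Y) Z W = (starRingEnd ℂ) a * R X Y Z W
  add3 : ∀ X Y Z Z' W, R X Y (Z + Z') W = R X Y Z W + R X Y Z' W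
  smul3 : ∀ (a : ℂ) (X Y Z W), R X Y (a • Z) W = a * R X Y Z W
  add4 : ∀ X Y Z W W', R X Y Z (W + W') = R X Y Z W + R X Y Z W'
  smul4 : ∀ (a : ℂ) (X Y Z W), R X Y Z (a • W) = (starRingEnd ℂ) a * R X Y Z W
  sym13 : ∀ X Y Z W, R X Y Z W = R Z Y X W
  symConj : ∀ X Y Z W, R X Y Z W = (starRingEnd ℂ) (R Y X W Z)

lemma kl_expand {V : Type*} [AddCommGroup V] [Module ℂ V] {R : V → V → V → V → ℂ}
    (hR : IsKahlerLike R) (u w : V) (a : ℂ) :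
    R (u + a • w) (u + a • w) (u + a • w) (u + a • w) =
      R u u u u
      + (a * R w u u u + (starRingEnd ℂ) a * R u w u u + a * R u u w u
        + (starRingEnd ℂ) a * R u u u w)
      + (a * (starRingEnd ℂ) a * R w w u u + a * a * R w u w u
        + a * (starRingEnd ℂ) a * R w u u w
        + (starRingEnd ℂ) a * a * R u w w u
        + (starRingEnd ℂ) a * (starRingEnd ℂ) a * R u w u w
        + a * (starRingEnd ℂ) a * R u u w w
        + a * a * (starRingEnd ℂ) a * R w w w u
        + a * (starRingEnd ℂ) a * (starRingEnd ℂ) a * R w w u w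
        + a * a * (starRingEnd ℂ) a * R w u w w
        + (starRingEnd ℂ) a * a * (starRingEnd ℂ) a * R u w w w
        + a * a * (starRingEnd ℂ) a * (starRingEnd ℂ) a * R w w w w) := by
  simp only [hR.add1, hR.add2, hR.add3, hR.add4, hR.smul1, hR.smul2, hR.smul3, hR.smul4]
  ring

set_option maxHeartbeats 2000000 in
/-- First-order condition at a minimizing direction: if the unit vector `u` minimizes the
holomorphic sectional curvature over unit vectors, then for every unit vector `w` orthogonal
to `u` one has `R(u,u,u,w) = 0` and `R(u,u,w,u) = 0`. -/
theorem kahlerLike_min_first_order {V : Type*} [NormedAddCommGroup V] [InnerProductSpace ℂ V]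
    [FiniteDimensional ℂ V]
    (R : V → V → V → V → ℂ) (hR : IsKahlerLike R)
    (u : V) (hu : ‖u‖ = 1)
    (hmin : ∀ v : V, ‖v‖ = 1 → (R u u u u).re ≤ (R v v v v).re) :
    ∀ w : V, ‖w‖ = 1 → (inner ℂ w u : ℂ) = 0 →
      R u u u w = 0 ∧ R u u w u = 0 := by
  intro w hw hwu
  have hconj : R u u u w = (starRingEnd ℂ) (R u u w u) := hR.symConj u u u w
  suffices hA : R u u w u = 0 by
    refine ⟨?_, hA⟩
    rw [hconj, hA, map_zero]
  by_contra hA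
  set A := R u u w u with hAdef
  have hApos : 0 < ‖A‖ := by
    simpa using (norm_pos_iff.mpr hA)
  -- the unit complex number x with x * A = -|A|
  set x : ℂ := -(starRingEnd ℂ) A / (‖A‖) with hxdef
  have hxabs : ‖x‖ = 1 := by
    rw [hxdef, norm_div]
    simp [Complex.norm_conj, hApos.ne']
  have hxA : x * A = -(‖A‖ : ℂ) := by
    rw [hxdef, div_mul_eq_mul_div, neg_mul, mul_comm, Complex.mul_conj',
      neg_div, sq, mul_div_assoc, div_self (by exact_mod_cast hApos.ne'), mul_one]
  -- the constant K bounding higher order terms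
  set K : ℝ := ‖R w w u u‖ + ‖R w u w u‖
      + ‖R w u u w‖ + ‖R u w w u‖ + ‖R u w u w‖
      + ‖R u u w w‖ + ‖R w w w u‖ + ‖R w w u w‖
      + ‖R w u w w‖ + ‖R u w w w‖ + ‖R w w w w‖
      with hKdef
  have hK0 : 0 ≤ K := by positivity
  set K' : ℝ := K + 3 * |(R u u u u).re| with hK'def
  have hK'0 : 0 ≤ K' := by positivity
  have key : ∀ ε : ℝ, 0 < ε → ε ≤ 1 → 4 * ‖A‖ ≤ ε * K' := by
    intro ε hε hε1
    set a : ℂ := (ε : ℂ) * x with hadef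
    have haabs : ‖a‖ = ε := by
      rw [hadef, norm_mul, hxabs, Complex.norm_real, Real.norm_eq_abs, abs_of_pos hε, mul_one]
    -- norm of u + a • w
    have hnorm2 : ‖u + a • w‖ ^ 2 = 1 + ε ^ 2 := by
      rw [@norm_add_sq ℂ]
      have h1 : (inner ℂ u (a • w) : ℂ) = 0 := by
        rw [inner_smul_right]
        have : (inner ℂ u w : ℂ) = 0 := by
          rw [← inner_conj_symm, hwu, map_zero]
        rw [this, mul_zero]
      rw [h1, norm_smul, hu, hw]
      simp [haabs]
    have hnormpos : 0 < ‖u + a • w‖ := by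
      have : (0:ℝ) < 1 + ε ^ 2 := by positivity
      nlinarith [norm_nonneg (u + a • w)]
    set n : ℝ := ‖u + a • w‖ with hndef
    set v : V := ((n⁻¹ : ℝ) : ℂ) • (u + a • w) with hvdef
    have hvnorm : ‖v‖ = 1 := by
      rw [hvdef, norm_smul]
      simp only [Complex.norm_real, Real.norm_eq_abs]
      rw [abs_of_pos (inv_pos.mpr hnormpos)]
      field_simp
      rfl
    have hmin' := hmin v hvnorm
    have hRv : R v v v v = (((n⁻¹ : ℝ) : ℂ))^4 * R (u + a • w) (u + a • w) (u + a • w) (u + a • w) := by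
      rw [hvdef, hR.smul1, hR.smul2, hR.smul3, hR.smul4, Complex.conj_ofReal]
      ring
    set S := R (u + a • w) (u + a • w) (u + a • w) (u + a • w) with hSdef
    have hRvre : (R v v v v).re = (n⁻¹)^4 * S.re := by
      rw [hRv]
      rw [show (((n⁻¹ : ℝ) : ℂ))^4 = (((n⁻¹^4 : ℝ) : ℂ)) by push_cast; ring]
      rw [Complex.re_ofReal_mul]
    have hn4 : (n⁻¹)^4 = ((1 + ε^2)^2)⁻¹ := by
      rw [← hnorm2]
      field_simp
    -- inequality: H(u) * (1+ε²)² ≤ S.re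
    have hineq1 : (R u u u u).re * (1 + ε^2)^2 ≤ S.re := by
      rw [hRvre, hn4] at hmin'
      have hpos : (0:ℝ) < (1 + ε^2)^2 := by positivity
      calc (R u u u u).re * (1 + ε^2)^2
          ≤ ((1 + ε^2)^2)⁻¹ * S.re * (1 + ε^2)^2 :=
            mul_le_mul_of_nonneg_right hmin' hpos.le
        _ = S.re := by field_simp
    -- expand S
    have hS := kl_expand hR u w a
    rw [← hSdef] at hS
    -- rewrite first-order terms
    have h1 : R w u u u = A := hR.sym13 w u u u
    have h2 : R u w u u = (starRingEnd ℂ) A := by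
      rw [hR.symConj u w u u, h1]
    have haA : a * A = ((-(ε * ‖A‖) : ℝ) : ℂ) := by
      rw [hadef, mul_assoc, hxA]
      push_cast
      ring
    set T : ℂ := a * (starRingEnd ℂ) a * R w w u u + a * a * R w u w u
        + a * (starRingEnd ℂ) a * R w u u w
        + (starRingEnd ℂ) a * a * R u w w u
        + (starRingEnd ℂ) a * (starRingEnd ℂ) a * R u w u w
        + a * (starRingEnd ℂ) a * R u u w w
        + a * a * (starRingEnd ℂ) a * R w w w u
        + a * (starRingEnd ℂ) a * (starRingEnd ℂ) a * R w w u w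
        + a * a * (starRingEnd ℂ) a * R w u w w
        + (starRingEnd ℂ) a * a * (starRingEnd ℂ) a * R u w w w
        + a * a * (starRingEnd ℂ) a * (starRingEnd ℂ) a * R w w w w with hTdef
    have hS2 : S = R u u u u + (2 * (a * A) + 2 * (starRingEnd ℂ) (a * A)) + T := by
      rw [hS, h1, h2, hconj]
      simp only [map_mul]
      ring
    have hfo : (2 * (a * A) + 2 * (starRingEnd ℂ) (a * A)).re
        = -(4 * (ε * ‖A‖)) := by
      rw [haA, Complex.conj_ofReal]
      simp only [Complex.add_re, Complex.mul_re, Complex.ofReal_re, Complex.ofReal_im]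
      norm_num
      ring
    have hSre : S.re = (R u u u u).re - 4 * (ε * ‖A‖) + T.re := by
      rw [hS2]
      simp only [Complex.add_re, hfo]
      ring
    -- bound T.re
    have haconj : ‖(starRingEnd ℂ) a‖ = ε := by
      rw [Complex.norm_conj, haabs]
    have bound : ∀ c z : ℂ, ‖c‖ ≤ ε^2 → (c * z).re ≤ ε^2 * ‖z‖ := by
      intro c z hc
      calc (c * z).re ≤ ‖c * z‖ := Complex.re_le_norm _
        _ = ‖c‖ * ‖z‖ := norm_mul _ _
        _ ≤ ε^2 * ‖z‖ :=
            mul_le_mul_of_nonneg_right hc (norm_nonneg z)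
    have hb2 : ∀ b c : ℂ, ‖b‖ = ε → ‖c‖ = ε →
        ‖b * c‖ ≤ ε ^ 2 := by
      intro b c hb hc
      rw [norm_mul, hb, hc, sq]
    have hb3 : ∀ b c d : ℂ, ‖b‖ = ε → ‖c‖ = ε → ‖d‖ = ε →
        ‖b * c * d‖ ≤ ε ^ 2 := by
      intro b c d hb hc hd
      rw [norm_mul, norm_mul, hb, hc, hd]
      nlinarith [mul_nonneg (mul_nonneg hε.le hε.le) (sub_nonneg.mpr hε1)]
    have hb4 : ∀ b c d e : ℂ, ‖b‖ = ε → ‖c‖ = ε → ‖d‖ = ε →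
        ‖e‖ = ε → ‖b * c * d * e‖ ≤ ε ^ 2 := by
      intro b c d e hb hc hd he
      rw [norm_mul, norm_mul, norm_mul, hb, hc, hd, he]
      have h2 : ε ^ 2 ≤ 1 := by nlinarith
      nlinarith [mul_nonneg (mul_nonneg hε.le hε.le) (sub_nonneg.mpr h2)]
    have hTre : T.re ≤ ε^2 * K := by
      rw [hTdef, hKdef]
      simp only [Complex.add_re]
      have t1 := bound _ (R w w u u) (hb2 _ _ haabs haconj)
      have t2 := bound _ (R w u w u) (hb2 _ _ haabs haabs)
      have t3 := bound _ (R w u u w) (hb2 _ _ haabs haconj)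
      have t4 := bound _ (R u w w u) (hb2 _ _ haconj haabs)
      have t5 := bound _ (R u w u w) (hb2 _ _ haconj haconj)
      have t6 := bound _ (R u u w w) (hb2 _ _ haabs haconj)
      have t7 := bound _ (R w w w u) (hb3 _ _ _ haabs haabs haconj)
      have t8 := bound _ (R w w u w) (hb3 _ _ _ haabs haconj haconj)
      have t9 := bound _ (R w u w w) (hb3 _ _ _ haabs haabs haconj)
      have t10 := bound _ (R u w w w) (hb3 _ _ _ haconj haabs haconj)
      have t11 := bound _ (R w w w w) (hb4 _ _ _ _ haabs haabs haconj haconj)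
      nlinarith [t1, t2, t3, t4, t5, t6, t7, t8, t9, t10, t11]
    -- combine
    rw [hSre] at hineq1
    have h4 : 4 * ε * ‖A‖ ≤ ε^2 * K' := by
      have hb1 : -|(R u u u u).re| * (2*ε^2 + ε^4) ≤ (R u u u u).re * (2*ε^2 + ε^4) :=
        mul_le_mul_of_nonneg_right (neg_abs_le _) (by positivity)
      have hsq : ε ^ 2 ≤ 1 := by nlinarith
      have hq : (0:ℝ) ≤ ε ^ 2 * (1 - ε ^ 2) :=
        mul_nonneg (by positivity) (by linarith)
      have hb2' : |(R u u u u).re| * (2*ε^2 + ε^4) ≤ |(R u u u u).re| * (3*ε^2) :=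
        mul_le_mul_of_nonneg_left (by nlinarith) (abs_nonneg _)
      rw [hK'def]
      nlinarith [hineq1, hTre, hb1, hb2']
    nlinarith [h4, hε, hApos, mul_pos hε hε]
  -- use key with a small ε to conclude |A| = 0, contradiction
  set ε0 : ℝ := min 1 (‖A‖ / (K' + 1)) with hε0def
  have hε0pos : 0 < ε0 :=
    lt_min one_pos (div_pos hApos (by linarith))
  have hkey := key ε0 hε0pos (min_le_left _ _)
  have h5 : ε0 * K' ≤ ‖A‖ := by
    have hle : ε0 ≤ ‖A‖ / (K' + 1) := min_le_right _ _
    calc ε0 * K' ≤ (‖A‖ / (K' + 1)) * K' :=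
          mul_le_mul_of_nonneg_right hle hK'0
      _ ≤ ‖A‖ := by
          rw [div_mul_eq_mul_div, div_le_iff₀ (by linarith)]
          nlinarith [hApos]
  linarith
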